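/- arXiv:2505.11050 — 3 statements merged into one kernel-verified Lean document; each statement's English description precedes it below -/
import Mathlib

section
/- Every aggregate-combine layer, which relabels each node n of an ℝ^p-labeled graph G by comb(G(n), agg{{G(m) : m an out-neighbor of n}}) where agg acts on finite multisets of labels, is invariant under graded bisimulation. -/
/-- A finite labeled directed graph over label set `X`, with decidable edges. -/
structure LGraph (X : Type) where
  Node : Type
  fin : Fintype Node
  edge : Node → Node → Prop
  dec : DecidableRel edge
  label : Node → X

/-- The set of out-neighbours of a node. -/
def outN {X : Type} (G : LGraph X) (n : G.Node) : Set G.Node := {m | G.edge n m}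

/-- `Z` is a graded bisimulation between `G` and `H`. -/
def IsGBisim {X : Type} (G H : LGraph X) (Z : G.Node → H.Node → Prop) : Prop :=
  ∀ n m, Z n m →
    G.label n = H.label m ∧
    ∃ f : outN G n → outN H m, Function.Bijective f ∧ ∀ i : outN G n, Z i.1 (f i).1

/-- Pointed graphs `(G,n)` and `(H,m)` are graded bisimilar. -/
def GBisimilar {X : Type} (G H : LGraph X) (n : G.Node) (m : H.Node) : Prop :=
  ∃ Z, IsGBisim G H Z ∧ Z n m

/-- A label transformer keeps nodes and edges, changing only labels. -/
def applyLT {X Y : Type} (f : (G : LGraph X) → G.Node → Y) (G : LGraph X) : LGraph Y :=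
  { Node := G.Node, fin := G.fin, edge := G.edge, dec := G.dec, label := f G }

/-- Invariance of a label transformer under graded bisimulation. -/
def LTInvariant {X Y : Type} (f : (G : LGraph X) → G.Node → Y) : Prop :=
  ∀ (G H : LGraph X) (n : G.Node) (m : H.Node),
    GBisimilar G H n m → GBisimilar (applyLT f G) (applyLT f H) n m

/-- The finite multiset of labels of the out-neighbours of `n`. -/
def nbrMultiset {X : Type} (G : LGraph X) (n : G.Node) : Multiset X :=
  letI := G.fin
  letI : DecidablePred (fun m => G.edge n m) := fun m => G.dec n m
  ((Finset.univ.filter (fun m => G.edge n m)).val.map G.label)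


lemma nbrMultiset_eq_map_univ {X : Type} (G : LGraph X) (n : G.Node)
    [inst : Fintype (outN G n)] :
    nbrMultiset G n =
      (Finset.univ.val : Multiset (outN G n)).map (fun i => G.label i.1) := by
  letI := G.fin
  letI : DecidablePred (fun m => G.edge n m) := fun m => G.dec n m
  rw [nbrMultiset, ← Finset.univ_val_map_subtype_val (fun m => G.edge n m),
    Multiset.map_map]
  have : inst = Subtype.fintype fun m => G.edge n m := Subsingleton.elim _ _
  subst this
  rfl

lemma nbrMultiset_eq_of_bisim {X : Type} {G H : LGraph X} {Z : G.Node → H.Node → Prop}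
    (hZ : IsGBisim G H Z) {n : G.Node} {m : H.Node} (hnm : Z n m) :
    nbrMultiset G n = nbrMultiset H m := by
  obtain ⟨f, hf, hfl⟩ := (hZ n m hnm).2
  letI := G.fin; letI := H.fin
  letI : Fintype (outN G n) := by
    letI : DecidablePred (fun x => G.edge n x) := fun x => G.dec n x
    exact Fintype.ofFinset (Finset.univ.filter (fun x => G.edge n x)) (by intro x; simp [outN])
  letI : Fintype (outN H m) := by
    letI : DecidablePred (fun x => H.edge m x) := fun x => H.dec m x
    exact Fintype.ofFinset (Finset.univ.filter (fun x => H.edge m x)) (by intro x; simp [outN])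
  rw [nbrMultiset_eq_map_univ, nbrMultiset_eq_map_univ]
  rw [← Multiset.map_univ_val_equiv (Equiv.ofBijective f hf), Multiset.map_map]
  refine Multiset.map_congr rfl ?_
  intro i _
  simp only [Function.comp_apply, Equiv.ofBijective_apply]
  exact (hZ i.1 (f i).1 (hfl i)).1

/-- Every aggregate-combine layer is invariant under graded bisimulation. -/
theorem acLayer_invariant (p h q : ℕ)
    (agg : Multiset (Fin p → ℝ) → (Fin h → ℝ))
    (comb : (Fin p → ℝ) → (Fin h → ℝ) → (Fin q → ℝ)) :
    LTInvariant (fun (G : LGraph (Fin p → ℝ)) (n : G.Node) =>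
      comb (G.label n) (agg (nbrMultiset G n))) := by
  rintro G H n m ⟨Z, hZ, hnm⟩
  refine ⟨Z, ?_, hnm⟩
  intro a b hab
  obtain ⟨hlab, f, hf, hfl⟩ := hZ a b hab
  refine ⟨?_, f, hf, hfl⟩
  show comb (G.label a) (agg (nbrMultiset G a)) = comb (H.label b) (agg (nbrMultiset H b))
  rw [hlab, nbrMultiset_eq_of_bisim hZ hab]
end

section
/- If φ is globally k-stable on (G, V) for some k ≥ 1, then its uniform k-approximation equals its true semantics: ⟦φ^{(k)}⟧_{G,V} = ⟦φ⟧_{G,V}. -/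
/-- Formulas of the graded modal μ-calculus in negation normal form, over
proposition symbols `P` and variables `X`. -/
inductive Form (P X : Type) : Type
  | prop : P → Form P X
  | nprop : P → Form P X
  | var : X → Form P X
  | and : Form P X → Form P X → Form P X
  | or : Form P X → Form P X → Form P X
  | dia : ℕ → Form P X → Form P X   -- ◇_k φ : at least k out-neighbours satisfy φ
  | box : ℕ → Form P X → Form P X   -- □_k φ : strictly fewer than k out-neighbours fail φ
  | mu : X → Form P X → Form P X
  | nu : X → Form P X → Form P X

variable {P X N : Type} [DecidableEq X]

/-- Iteration of a set operator from a given starting set. -/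
def fpIter (f : Set N → Set N) (init : Set N) : ℕ → Set N
  | 0 => init
  | i + 1 => f (fpIter f init i)

/-- True (Knaster–Tarski) semantics of μ-calculus formulas on a graph with
edge relation `E` and labeling `lab`, under valuation `V`. -/
def sem (E : N → N → Prop) (lab : N → P → Prop) : Form P X → (X → Set N) → Set N
  | .prop p, _ => {n | lab n p}
  | .nprop p, _ => {n | ¬ lab n p}
  | .var x, V => V x
  | .and φ ψ, V => sem E lab φ V ∩ sem E lab ψ V
  | .or φ ψ, V => sem E lab φ V ∪ sem E lab ψ V
  | .dia c φ, V => {n | c ≤ ({m | E n m} ∩ sem E lab φ V).ncard}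
  | .box c φ, V => {n | ({m | E n m} \ sem E lab φ V).ncard < c}
  | .mu x φ, V => ⋂₀ {S | sem E lab φ (Function.update V x S) ⊆ S}
  | .nu x φ, V => ⋃₀ {S | S ⊆ sem E lab φ (Function.update V x S)}

/-- Uniform `k`-approximation semantics: every fixpoint is iterated exactly `k`
times (least fixpoints from `∅`, greatest fixpoints from `univ`). -/
def asem (E : N → N → Prop) (lab : N → P → Prop) (k : ℕ) :
    Form P X → (X → Set N) → Set N
  | .prop p, _ => {n | lab n p}
  | .nprop p, _ => {n | ¬ lab n p}
  | .var x, V => V x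
  | .and φ ψ, V => asem E lab k φ V ∩ asem E lab k ψ V
  | .or φ ψ, V => asem E lab k φ V ∪ asem E lab k ψ V
  | .dia c φ, V => {n | c ≤ ({m | E n m} ∩ asem E lab k φ V).ncard}
  | .box c φ, V => {n | ({m | E n m} \ asem E lab k φ V).ncard < c}
  | .mu x φ, V => fpIter (fun S => asem E lab k φ (Function.update V x S)) ∅ k
  | .nu x φ, V => fpIter (fun S => asem E lab k φ (Function.update V x S)) Set.univ k

/-- Free variables of a formula. -/
def freeVars : Form P X → Set X
  | .prop _ => ∅
  | .nprop _ => ∅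
  | .var x => {x}
  | .and φ ψ => freeVars φ ∪ freeVars ψ
  | .or φ ψ => freeVars φ ∪ freeVars ψ
  | .dia _ φ => freeVars φ
  | .box _ φ => freeVars φ
  | .mu x φ => freeVars φ \ {x}
  | .nu x φ => freeVars φ \ {x}

/-- Pointwise `k`-stability of a formula on `(G, V, n)`. -/
def stableAt (E : N → N → Prop) (lab : N → P → Prop) (k : ℕ) :
    Form P X → (X → Set N) → N → Prop
  | .prop _, _, _ => True
  | .nprop _, _, _ => True
  | .var _, _, _ => True
  | .and φ ψ, V, n => stableAt E lab k φ V n ∧ stableAt E lab k ψ V n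
  | .or φ ψ, V, n => stableAt E lab k φ V n ∧ stableAt E lab k ψ V n
  | .dia _ φ, V, n => stableAt E lab k φ V n
  | .box _ φ, V, n => stableAt E lab k φ V n
  | .mu x ψ, V, n =>
      ((n ∈ fpIter (fun S => asem E lab k ψ (Function.update V x S)) ∅ k) ↔
        (n ∈ fpIter (fun S => asem E lab k ψ (Function.update V x S)) ∅ (k - 1))) ∧
      ∀ i < k, stableAt E lab k ψ
        (Function.update V x
          (fpIter (fun S => asem E lab k ψ (Function.update V x S)) ∅ i)) n
  | .nu x ψ, V, n =>
      ((n ∈ fpIter (fun S => asem E lab k ψ (Function.update V x S)) Set.univ k) ↔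
        (n ∈ fpIter (fun S => asem E lab k ψ (Function.update V x S)) Set.univ (k - 1))) ∧
      ∀ i < k, stableAt E lab k ψ
        (Function.update V x
          (fpIter (fun S => asem E lab k ψ (Function.update V x S)) Set.univ i)) n

/-- Global `k`-stability of a formula on `(G, V)`. -/
def gStable (E : N → N → Prop) (lab : N → P → Prop) (k : ℕ) :
    Form P X → (X → Set N) → Prop
  | .prop _, _ => True
  | .nprop _, _ => True
  | .var _, _ => True
  | .and φ ψ, V => gStable E lab k φ V ∧ gStable E lab k ψ V
  | .or φ ψ, V => gStable E lab k φ V ∧ gStable E lab k ψ V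
  | .dia _ φ, V => gStable E lab k φ V
  | .box _ φ, V => gStable E lab k φ V
  | .mu x ψ, V =>
      fpIter (fun S => asem E lab k ψ (Function.update V x S)) ∅ k =
        fpIter (fun S => asem E lab k ψ (Function.update V x S)) ∅ (k - 1) ∧
      ∀ i < k, gStable E lab k ψ
        (Function.update V x
          (fpIter (fun S => asem E lab k ψ (Function.update V x S)) ∅ i))
  | .nu x ψ, V =>
      fpIter (fun S => asem E lab k ψ (Function.update V x S)) Set.univ k =
        fpIter (fun S => asem E lab k ψ (Function.update V x S)) Set.univ (k - 1) ∧
      ∀ i < k, gStable E lab k ψ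
        (Function.update V x
          (fpIter (fun S => asem E lab k ψ (Function.update V x S)) Set.univ i))

/-- `(j,k)`-stability of a fixpoint formula on `(G, V, n)` (trivially true on
non-fixpoint formulas). -/
def jkStable (E : N → N → Prop) (lab : N → P → Prop) (j k : ℕ) :
    Form P X → (X → Set N) → N → Prop
  | .mu x ψ, V, n =>
      ∀ i < j, stableAt E lab k ψ
        (Function.update V x
          (fpIter (fun S => asem E lab k ψ (Function.update V x S)) ∅ i)) n
  | .nu x ψ, V, n =>
      ∀ i < j, stableAt E lab k ψ
        (Function.update V x
          (fpIter (fun S => asem E lab k ψ (Function.update V x S)) Set.univ i)) n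
  | _, _, _ => True

lemma update_mono {V V' : X → Set N} (h : ∀ y, V y ⊆ V' y) (x : X) (S : Set N) :
    ∀ y, Function.update V x S y ⊆ Function.update V' x S y := by
  intro y
  by_cases hy : y = x
  · subst hy; simp
  · simp [Function.update_of_ne hy]; exact h y

lemma update_mono' (V : X → Set N) (x : X) {A B : Set N} (h : A ⊆ B) :
    ∀ y, Function.update V x A y ⊆ Function.update V x B y := by
  intro y
  by_cases hy : y = x
  · subst hy; simpa
  · simp [Function.update_of_ne hy]

lemma sem_mono [Fintype N] (E : N → N → Prop) (lab : N → P → Prop)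
    (φ : Form P X) : ∀ {V V' : X → Set N}, (∀ y, V y ⊆ V' y) →
    sem E lab φ V ⊆ sem E lab φ V' := by
  induction φ with
  | prop p => intro V V' _; exact subset_rfl
  | nprop p => intro V V' _; exact subset_rfl
  | var x => intro V V' h; exact h x
  | and φ ψ ih1 ih2 =>
    intro V V' h
    exact Set.inter_subset_inter (ih1 h) (ih2 h)
  | or φ ψ ih1 ih2 =>
    intro V V' h
    exact Set.union_subset_union (ih1 h) (ih2 h)
  | dia c φ ih =>
    intro V V' h n hn
    simp only [sem, Set.mem_setOf_eq] at hn ⊢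
    exact le_trans hn (Set.ncard_le_ncard
      (Set.inter_subset_inter_right _ (ih h)) (Set.toFinite _))
  | box c φ ih =>
    intro V V' h n hn
    simp only [sem, Set.mem_setOf_eq] at hn ⊢
    exact lt_of_le_of_lt (Set.ncard_le_ncard
      (Set.diff_subset_diff_right (ih h)) (Set.toFinite _)) hn
  | mu x φ ih =>
    intro V V' h
    apply Set.sInter_subset_sInter
    intro S hS
    exact le_trans (ih (update_mono h x S)) hS
  | nu x φ ih =>
    intro V V' h
    apply Set.sUnion_subset_sUnion
    intro S hS
    exact le_trans hS (ih (update_mono h x S))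

/-- If `φ` is globally `k`-stable on `(G,V)` then the uniform `k`-approximation
equals the true semantics. -/
theorem gStable_approx_eq_sem [Fintype N] (E : N → N → Prop) (lab : N → P → Prop)
    (k : ℕ) (hk : 1 ≤ k) (φ : Form P X) (V : X → Set N)
    (h : gStable E lab k φ V) :
    asem E lab k φ V = sem E lab φ V := by
  induction φ generalizing V with
  | prop p => rfl
  | nprop p => rfl
  | var x => rfl
  | and φ ψ ih1 ih2 =>
    simp only [asem, sem, ih1 V h.1, ih2 V h.2]
  | or φ ψ ih1 ih2 =>
    simp only [asem, sem, ih1 V h.1, ih2 V h.2]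
  | dia c φ ih =>
    simp only [asem, sem, ih V h]
  | box c φ ih =>
    simp only [asem, sem, ih V h]
  | mu x ψ ih =>
    obtain ⟨hfix, hst⟩ := h
    set f := fun S => asem E lab k ψ (Function.update V x S) with hf
    set g := fun S => sem E lab ψ (Function.update V x S) with hg
    have hfg : ∀ i, i ≤ k → fpIter f ∅ i = fpIter g ∅ i := by
      intro i hi
      induction i with
      | zero => rfl
      | succ i ihi =>
        have hik : i < k := hi
        have hstab := hst i hik
        have := ih (Function.update V x (fpIter f ∅ i)) hstab
        show f (fpIter f ∅ i) = g (fpIter g ∅ i)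
        rw [← ihi hik.le]
        exact this
    have hk' : k - 1 + 1 = k := Nat.succ_pred_eq_of_pos hk
    have hTf : f (fpIter f ∅ k) = fpIter f ∅ k := by
      conv_lhs => rw [hfix]
      show fpIter f ∅ (k - 1 + 1) = _
      rw [hk']
    have hTg : g (fpIter f ∅ k) = fpIter f ∅ k := by
      have hstab := hst (k - 1) (by omega)
      rw [hfix] at hTf ⊢
      exact (ih (Function.update V x (fpIter f ∅ (k - 1))) hstab).symm.trans hTf
    have hsub : ∀ i, ∀ S, g S ⊆ S → fpIter g ∅ i ⊆ S := by
      intro i S hS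
      induction i with
      | zero => exact Set.empty_subset S
      | succ i ihi =>
        refine le_trans ?_ hS
        exact sem_mono E lab ψ (update_mono' V x ihi)
    show fpIter f ∅ k = ⋂₀ {S | sem E lab ψ (Function.update V x S) ⊆ S}
    apply subset_antisymm
    · apply Set.subset_sInter
      intro S hS
      rw [hfg k le_rfl]
      exact hsub k S hS
    · exact Set.sInter_subset_of_mem hTg.le
  | nu x ψ ih =>
    obtain ⟨hfix, hst⟩ := h
    set f := fun S => asem E lab k ψ (Function.update V x S) with hf
    set g := fun S => sem E lab ψ (Function.update V x S) with hg
    have hfg : ∀ i, i ≤ k → fpIter f Set.univ i = fpIter g Set.univ i := by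
      intro i hi
      induction i with
      | zero => rfl
      | succ i ihi =>
        have hik : i < k := hi
        have hstab := hst i hik
        have := ih (Function.update V x (fpIter f Set.univ i)) hstab
        show f (fpIter f Set.univ i) = g (fpIter g Set.univ i)
        rw [← ihi hik.le]
        exact this
    have hk' : k - 1 + 1 = k := Nat.succ_pred_eq_of_pos hk
    have hTf : f (fpIter f Set.univ k) = fpIter f Set.univ k := by
      conv_lhs => rw [hfix]
      show fpIter f Set.univ (k - 1 + 1) = _
      rw [hk']
    have hTg : g (fpIter f Set.univ k) = fpIter f Set.univ k := by
      have hstab := hst (k - 1) (by omega)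
      rw [hfix] at hTf ⊢
      exact (ih (Function.update V x (fpIter f Set.univ (k - 1))) hstab).symm.trans hTf
    have hsub : ∀ i, ∀ S, S ⊆ g S → S ⊆ fpIter g Set.univ i := by
      intro i S hS
      induction i with
      | zero => exact Set.subset_univ S
      | succ i ihi =>
        refine le_trans hS ?_
        exact sem_mono E lab ψ (update_mono' V x ihi)
    show fpIter f Set.univ k = ⋃₀ {S | S ⊆ sem E lab ψ (Function.update V x S)}
    apply subset_antisymm
    · exact Set.subset_sUnion_of_mem hTg.ge
    · apply Set.sUnion_subset
      intro S hS
      rw [hfg k le_rfl]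
      exact hsub k S hS
end

section
/- Let α = πX.ψ be a fixpoint subformula, k ≥ 1, and n a node of G. If (i) n ∈ ⟦α^{(k)}⟧_{G,V} iff n ∈ ⟦π^{k-1}X.ψ^{(k)}⟧_{G,V}, (ii) α is (k-1,k)-stable on (G,V,n), (iii) V(X) = ⟦π^{k-1}X.ψ^{(k)}⟧_{G,V}, and (iv) ψ is k-stable on (G,V,n), then α is k-stable on (G,V,n). -/
variable {P X N : Type} [DecidableEq X]

/-- The fixpoint formula `πX.ψ`, where `π` is `μ` if `isMu` and `ν` otherwise. -/
def mkFp (isMu : Bool) (x : X) (ψ : Form P X) : Form P X :=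
  if isMu then Form.mu x ψ else Form.nu x ψ

/-- The starting set of the fixpoint iteration: `∅` for `μ`, `univ` for `ν`. -/
def fpInit (N : Type) (isMu : Bool) : Set N :=
  if isMu then ∅ else Set.univ

/-- Sufficient conditions for `k`-stability of a fixpoint formula `α = πX.ψ`
at a node `n`. -/
theorem stableAt_fixpoint_of [Fintype N] (E : N → N → Prop) (lab : N → P → Prop)
    (isMu : Bool) (x : X) (ψ : Form P X) (k : ℕ) (hk : 1 ≤ k)
    (V : X → Set N) (n : N)
    (h1 : (n ∈ asem E lab k (mkFp isMu x ψ) V) ↔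
      n ∈ fpIter (fun S => asem E lab k ψ (Function.update V x S)) (fpInit N isMu) (k - 1))
    (h2 : jkStable E lab (k - 1) k (mkFp isMu x ψ) V n)
    (h3 : V x = fpIter (fun S => asem E lab k ψ (Function.update V x S)) (fpInit N isMu) (k - 1))
    (h4 : stableAt E lab k ψ V n) :
    stableAt E lab k (mkFp isMu x ψ) V n := by
  cases isMu <;>
  · simp only [mkFp, fpInit, Bool.false_eq_true, if_true, if_false, asem, stableAt, jkStable] at *
    refine ⟨h1, fun i hi => ?_⟩
    rcases lt_or_eq_of_le (Nat.le_of_lt_succ (by omega : i < (k-1)+1)) with h | h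
    · exact h2 i h
    · subst h
      rw [← h3, Function.update_eq_self]
      exact h4
end
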